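/- Fix N ≥ 1 and an N-periodic family of real matrices A_k ∈ ℝ^{n×n}, B_k ∈ ℝ^{n×m}, C_k ∈ ℝ^{m×n}, D_k ∈ ℝ^{m×m}, with every D_k invertible, and cycled matrices Ǎ, B̌, Č, Ď. Define Γ_k := A_k − B_k D_k⁻¹ C_k and Φ_inv := Γ_{N−1} Γ_{N−2} ··· Γ_0. Then ρ(Φ_inv) < 1 if and only if ρ(Ǎ − B̌ Ď⁻¹ Č) < 1, where ρ denotes the spectral radius. -/

import Mathlib

open Matrix
open scoped ENNReal NNReal

/-- Spectral radius of a real square matrix: the spectral radius (max |λ| over complex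
eigenvalues) of the matrix viewed as a complex matrix. -/
noncomputable def specRad {ι : Type} [Fintype ι] [DecidableEq ι] (M : Matrix ι ι ℝ) : ℝ≥0∞ :=
  spectralRadius ℂ (M.map Complex.ofReal)

/-- The cycled (1-shift block-circulant) matrix: the (i,j) block equals `M j` if
`i = (j+1) mod N` and `0` otherwise. -/
def cyc (N : ℕ) {n m : ℕ} (M : ℕ → Matrix (Fin n) (Fin m) ℝ) :
    Matrix (Fin N × Fin n) (Fin N × Fin m) ℝ :=
  fun p q => if (p.1 : ℕ) = ((q.1 : ℕ) + 1) % N then M (q.1 : ℕ) p.2 q.2 else 0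

/-- Block-diagonal matrix `diag (M 0, …, M (N-1))`. -/
def bdiag (N : ℕ) {p n : ℕ} (M : ℕ → Matrix (Fin p) (Fin n) ℝ) :
    Matrix (Fin N × Fin p) (Fin N × Fin n) ℝ :=
  fun q r => if q.1 = r.1 then M (q.1 : ℕ) q.2 r.2 else 0

/-- The descending product `A (N-1) * A (N-2) * ⋯ * A 0` (monodromy-type product). -/
def prodDesc {n : ℕ} (A : ℕ → Matrix (Fin n) (Fin n) ℝ) (N : ℕ) : Matrix (Fin n) (Fin n) ℝ :=
  ((List.range N).reverse.map A).prod

/-- State transition product `Φ(j,i) = A (j-1) * ⋯ * A i` for `j > i`, and `Φ(i,i) = 1`. -/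
def stp {n : ℕ} (A : ℕ → Matrix (Fin n) (Fin n) ℝ) (j i : ℕ) : Matrix (Fin n) (Fin n) ℝ :=
  ((List.range' i (j - i)).reverse.map A).prod

/-- Periodic Markov parameter `M_k^{(j)} = C (k+j) * Φ(k+j, k+1) * B k`. -/
def markov {n m p : ℕ} (A : ℕ → Matrix (Fin n) (Fin n) ℝ) (B : ℕ → Matrix (Fin n) (Fin m) ℝ)
    (C : ℕ → Matrix (Fin p) (Fin n) ℝ) (k j : ℕ) : Matrix (Fin p) (Fin m) ℝ :=
  C (k + j) * stp A (k + j) (k + 1) * B k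

/-- Kronecker product `e_i ⊗ w` of the `(i+1)`-th standard unit vector of `ℝ^N` with `w`. -/
def kron {N q : ℕ} (i : Fin N) (w : Fin q → ℝ) : Fin N × Fin q → ℝ :=
  fun p => if p.1 = i then w p.2 else 0

/-- The residue `k mod N` as an element of `Fin N`. -/
def finMod (N : ℕ) (hN : 0 < N) (k : ℕ) : Fin N := ⟨k % N, Nat.mod_lt _ hN⟩


variable {ι : Type} [Fintype ι] [DecidableEq ι]

lemma eigen_mem_spectrum (M : Matrix ι ι ℂ) (μ : ℂ) :
    μ ∈ spectrum ℂ M ↔ ∃ v ≠ 0, M.mulVec v = μ • v := by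
  rw [spectrum.mem_iff, (Matrix.isUnit_iff_isUnit_det _).not, isUnit_iff_ne_zero, not_not,
    ← Matrix.exists_mulVec_eq_zero_iff]
  apply exists_congr; intro v
  apply and_congr_right; intro hv
  rw [Matrix.sub_mulVec, sub_eq_zero]
  have : (algebraMap ℂ (Matrix ι ι ℂ) μ).mulVec v = μ • v := by
    rw [show algebraMap ℂ (Matrix ι ι ℂ) μ = μ • (1 : Matrix ι ι ℂ) from by
      rw [Algebra.algebraMap_eq_smul_one]]
    rw [Matrix.smul_mulVec, Matrix.one_mulVec]
  rw [this, eq_comm]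

lemma sr_lt_one (M : Matrix ι ι ℂ) :
    spectralRadius ℂ M < 1 ↔ ∀ μ ∈ spectrum ℂ M, (‖μ‖₊ : ℝ≥0∞) < 1 := by
  classical
  have hfin := Matrix.finite_spectrum (R := ℂ) M
  rw [spectralRadius, show spectrum ℂ M = ↑hfin.toFinset from (hfin.coe_toFinset).symm]
  simp only [Finset.mem_coe]
  rw [← Finset.sup_eq_iSup]
  rw [Finset.sup_lt_iff (by norm_num : (⊥:ℝ≥0∞) < 1)]


def cycC (N : ℕ) {n : ℕ} (G : ℕ → Matrix (Fin n) (Fin n) ℂ) :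
    Matrix (Fin N × Fin n) (Fin N × Fin n) ℂ :=
  fun p q => if (p.1 : ℕ) = ((q.1 : ℕ) + 1) % N then G (q.1 : ℕ) p.2 q.2 else 0

noncomputable def pdC {n : ℕ} (G : ℕ → Matrix (Fin n) (Fin n) ℂ) (N : ℕ) : Matrix (Fin n) (Fin n) ℂ :=
  ((List.range N).reverse.map G).prod

lemma pdC_succ {n : ℕ} (G : ℕ → Matrix (Fin n) (Fin n) ℂ) (j : ℕ) :
    pdC G (j + 1) = G j * pdC G j := by
  simp [pdC, List.range_succ]

def fpred {N : ℕ} (hN : 0 < N) (i : Fin N) : Fin N := ⟨((i : ℕ) + (N - 1)) % N, Nat.mod_lt _ hN⟩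

def fsucc {N : ℕ} (hN : 0 < N) (i : Fin N) : Fin N := ⟨((i : ℕ) + 1) % N, Nat.mod_lt _ hN⟩

lemma fsucc_fpred {N : ℕ} (hN : 0 < N) (i : Fin N) : fsucc hN (fpred hN i) = i := by
  have hi := i.isLt
  apply Fin.ext
  simp only [fsucc, fpred]
  rw [Nat.mod_add_mod, show (i : ℕ) + (N - 1) + 1 = (i : ℕ) + N from by omega,
    Nat.add_mod_right, Nat.mod_eq_of_lt hi]

lemma fpred_fsucc {N : ℕ} (hN : 0 < N) (i : Fin N) : fpred hN (fsucc hN i) = i := by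
  have hi := i.isLt
  apply Fin.ext
  simp only [fsucc, fpred]
  rw [Nat.mod_add_mod, show (i : ℕ) + 1 + (N - 1) = (i : ℕ) + N from by omega,
    Nat.add_mod_right, Nat.mod_eq_of_lt hi]

lemma cond_iff {N : ℕ} (hN : 0 < N) (i j : Fin N) :
    ((i : ℕ) = ((j : ℕ) + 1) % N) ↔ j = fpred hN i := by
  constructor
  · intro h
    have : fsucc hN j = i := by apply Fin.ext; simp [fsucc, h]
    rw [← this, fpred_fsucc]
  · intro h
    have : fsucc hN j = i := by rw [h, fsucc_fpred]
    rw [← this]; rfl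

def blk {N n : ℕ} (v : Fin N × Fin n → ℂ) (i : Fin N) : Fin n → ℂ := fun x => v (i, x)

lemma cycC_mulVec {N n : ℕ} (hN : 0 < N) (G : ℕ → Matrix (Fin n) (Fin n) ℂ)
    (v : Fin N × Fin n → ℂ) (i : Fin N) (x : Fin n) :
    (cycC N G).mulVec v (i, x) = (G ((fpred hN i : Fin N) : ℕ)).mulVec (blk v (fpred hN i)) x := by
  simp only [cycC, Matrix.mulVec, dotProduct, Fintype.sum_prod_type, ite_mul, zero_mul]
  simp only [cond_iff hN i]
  rw [Finset.sum_comm]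
  simp [Finset.sum_ite_eq', blk, Matrix.mulVec, dotProduct]

lemma cycC_eigen_iff {N n : ℕ} (hN : 0 < N) (G : ℕ → Matrix (Fin n) (Fin n) ℂ)
    (v : Fin N × Fin n → ℂ) (μ : ℂ) :
    (cycC N G).mulVec v = μ • v ↔
      ∀ j : Fin N, (G (j : ℕ)).mulVec (blk v j) = μ • blk v (fsucc hN j) := by
  constructor
  · intro h j
    funext x
    have := congrFun h (fsucc hN j, x)
    rw [cycC_mulVec hN, fpred_fsucc] at this
    simpa [blk] using this
  · intro h
    funext p
    obtain ⟨i, x⟩ := p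
    rw [cycC_mulVec hN]
    have := congrFun (h (fpred hN i)) x
    rw [fsucc_fpred] at this
    simpa [blk] using this

lemma lst {α : Type*} (G : ℕ → α) {i N : ℕ} (h : i < N) :
    (List.range N).map (fun s => G ((i + s) % N)) =
      (List.range' i (N - i)).map G ++ (List.range i).map G := by
  apply List.ext_getElem
  · simp; omega
  · intro k h1 h2
    simp only [List.length_map, List.length_range] at h1
    simp only [List.getElem_map, List.getElem_range, List.getElem_append, List.length_map,
      List.length_range', List.getElem_range']
    split
    · next hk => congr 1; rw [Nat.mod_eq_of_lt (by omega)]; omega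
    · next hk =>
      congr 1
      rw [Nat.mod_eq_sub_mod (by omega), Nat.mod_eq_of_lt (by omega)]
      omega

lemma rangesplit {i N : ℕ} (h : i ≤ N) :
    List.range N = List.range i ++ List.range' i (N - i) := by
  rw [List.range_eq_range', List.range_eq_range']
  have := List.range'_append (s := 0) (m := i) (n := N - i) (step := 1)
  simp only [Nat.one_mul, Nat.zero_add] at this
  conv_lhs => rw [show N = i + (N - i) from by omega]
  exact this.symm
lemma spec_cyc_of_spec_pd {N n : ℕ} (hN : 0 < N) (G : ℕ → Matrix (Fin n) (Fin n) ℂ)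
    {μ : ℂ} (hμ : μ ≠ 0) (h : μ ^ N ∈ spectrum ℂ (pdC G N)) :
    μ ∈ spectrum ℂ (cycC N G) := by
  rw [eigen_mem_spectrum] at h ⊢
  obtain ⟨w, hw, hΦ⟩ := h
  refine ⟨fun p => (μ ^ (p.1 : ℕ))⁻¹ * ((pdC G (p.1 : ℕ)).mulVec w p.2), ?_, ?_⟩
  · intro hz
    apply hw; funext x
    have h0 := congrFun hz (⟨0, hN⟩, x)
    simpa [pdC, Matrix.one_mulVec] using h0
  · rw [cycC_eigen_iff hN]
    intro j
    funext x
    have hstep : (G (j : ℕ)).mulVec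
        (blk (fun p : Fin N × Fin n => (μ ^ (p.1 : ℕ))⁻¹ * ((pdC G (p.1 : ℕ)).mulVec w p.2)) j) x
        = (μ ^ (j : ℕ))⁻¹ * ((pdC G ((j : ℕ) + 1)).mulVec w x) := by
      have : (blk (fun p : Fin N × Fin n => (μ ^ (p.1 : ℕ))⁻¹ * ((pdC G (p.1 : ℕ)).mulVec w p.2)) j)
          = (μ ^ (j : ℕ))⁻¹ • ((pdC G (j : ℕ)).mulVec w) := by
        funext y; simp [blk, smul_eq_mul]
      rw [this, Matrix.mulVec_smul, pdC_succ, ← Matrix.mulVec_mulVec]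
      simp
    rw [Pi.smul_apply, smul_eq_mul]
    simp only [blk] at hstep ⊢
    rw [hstep]
    have hjlt := j.isLt
    rcases Nat.lt_or_ge ((j : ℕ) + 1) N with hc | hc
    · have hval : ((fsucc hN j : Fin N) : ℕ) = (j : ℕ) + 1 := by
        simp [fsucc, Nat.mod_eq_of_lt hc]
      rw [hval]
      have hpow : (μ ^ (j : ℕ))⁻¹ = μ * (μ ^ ((j : ℕ) + 1))⁻¹ := by
        field_simp [pow_succ]
        ring
      rw [hpow]; ring
    · have hNj : (j : ℕ) + 1 = N := by omega
      have hval : ((fsucc hN j : Fin N) : ℕ) = 0 := by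
        simp [fsucc, hNj]
      rw [hval, hNj]
      have hx := congrFun hΦ x
      rw [hx]
      simp only [pdC, List.range_zero, List.reverse_nil, List.map_nil, List.prod_nil,
        Matrix.one_mulVec, pow_zero, inv_one, one_mul, Pi.smul_apply, smul_eq_mul]
      have : (μ ^ (j : ℕ))⁻¹ * (μ ^ N * w x) = μ * w x := by
        rw [show μ ^ N = μ ^ ((j : ℕ) + 1) from by rw [hNj], pow_succ]
        field_simp
      rw [this]

lemma spec_pd_of_spec_cyc {N n : ℕ} (hN : 0 < N) (G : ℕ → Matrix (Fin n) (Fin n) ℂ)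
    {μ : ℂ} (hμ : μ ≠ 0) (h : μ ∈ spectrum ℂ (cycC N G)) :
    μ ^ N ∈ spectrum ℂ (pdC G N) := by
  rw [eigen_mem_spectrum] at h
  obtain ⟨v, hv, hev⟩ := h
  rw [cycC_eigen_iff hN] at hev
  have hex : ∃ i : Fin N, blk v i ≠ 0 := by
    by_contra hc; push_neg at hc; apply hv; funext p
    have := congrFun (hc p.1) p.2; simpa [blk] using this
  obtain ⟨i, hi⟩ := hex
  set f : ℕ → Matrix (Fin n) (Fin n) ℂ := fun s => G (((i : ℕ) + s) % N) with hf
  have key : ∀ t : ℕ, (pdC f t).mulVec (blk v i)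
      = μ ^ t • blk v ⟨((i : ℕ) + t) % N, Nat.mod_lt _ hN⟩ := by
    intro t
    induction t with
    | zero =>
      have : (⟨((i : ℕ) + 0) % N, Nat.mod_lt _ hN⟩ : Fin N) = i :=
        Fin.ext (by simp [Nat.mod_eq_of_lt i.isLt])
      rw [this]
      simp [pdC, Matrix.one_mulVec]
    | succ t ih =>
      rw [pdC_succ, ← Matrix.mulVec_mulVec, ih, Matrix.mulVec_smul]
      set jt : Fin N := ⟨((i : ℕ) + t) % N, Nat.mod_lt _ hN⟩ with hjt
      have hft : f t = G (jt : ℕ) := rfl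
      rw [hft, hev jt]
      have : fsucc hN jt = ⟨((i : ℕ) + (t + 1)) % N, Nat.mod_lt _ hN⟩ := by
        apply Fin.ext
        have harith : (i : ℕ) + t + 1 = (i : ℕ) + (t + 1) := by omega
        simp only [fsucc, hjt, Nat.mod_add_mod, harith]
      rw [this, smul_smul, ← pow_succ]
  have hQ := key N
  have hiN : (⟨((i : ℕ) + N) % N, Nat.mod_lt _ hN⟩ : Fin N) = i :=
    Fin.ext (by simp [Nat.add_mod_right, Nat.mod_eq_of_lt i.isLt])
  rw [hiN] at hQ
  have hmem : μ ^ N ∈ spectrum ℂ (pdC f N) := (eigen_mem_spectrum _ _).2 ⟨blk v i, hi, hQ⟩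
  set W : Matrix (Fin n) (Fin n) ℂ := ((List.range (i : ℕ)).reverse.map G).prod with hW
  set X : Matrix (Fin n) (Fin n) ℂ :=
    ((List.range' (i : ℕ) (N - (i : ℕ))).reverse.map G).prod with hX
  have h1 : pdC f N = W * X := by
    rw [pdC, List.map_reverse, lst G i.isLt]
    rw [List.reverse_append, List.prod_append, ← List.map_reverse, ← List.map_reverse]
  have h2 : pdC G N = X * W := by
    rw [pdC, rangesplit (le_of_lt i.isLt), List.reverse_append, List.map_append, List.prod_append]
  rw [h1] at hmem
  have hswap := Set.ext_iff.mp (spectrum.nonzero_mul_comm W X) (μ ^ N)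
  rw [h2]
  exact (hswap.mp ⟨hmem, pow_ne_zero _ hμ⟩).1

lemma keyC {n N : ℕ} (hN : 0 < N) (G : ℕ → Matrix (Fin n) (Fin n) ℂ) :
    spectralRadius ℂ (pdC G N) < 1 ↔ spectralRadius ℂ (cycC N G) < 1 := by
  rw [sr_lt_one, sr_lt_one]
  have hcoe : ∀ z : ℂ, ((‖z‖₊ : ℝ≥0∞) < 1 ↔ ‖z‖₊ < 1) := by
    intro z
    rw [show (1 : ℝ≥0∞) = ((1 : ℝ≥0) : ℝ≥0∞) from rfl, ENNReal.coe_lt_coe]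
  constructor
  · intro h μ hμmem
    rw [hcoe]
    by_cases hμ : μ = 0
    · simp [hμ]
    · have hmem := spec_pd_of_spec_cyc hN G hμ hμmem
      have hlt := (hcoe _).mp (h _ hmem)
      rw [nnnorm_pow] at hlt
      by_contra hge
      push_neg at hge
      exact absurd hlt (not_lt.mpr (one_le_pow₀ hge))
  · intro h lam hlam
    rw [hcoe]
    by_cases hl : lam = 0
    · simp [hl]
    · obtain ⟨μ, hμN⟩ := IsAlgClosed.exists_pow_nat_eq lam hN
      have hμ0 : μ ≠ 0 := by
        intro e; apply hl; rw [← hμN, e, zero_pow hN.ne']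
      have hmem := spec_cyc_of_spec_pd hN G hμ0 (by rw [hμN]; exact hlam)
      have hlt := (hcoe _).mp (h _ hmem)
      rw [← hμN, nnnorm_pow]
      exact pow_lt_one' hlt hN.ne'

-- real side lemmas
lemma bdiag_mul {N a b c : ℕ} (M : ℕ → Matrix (Fin a) (Fin b) ℝ)
    (E : ℕ → Matrix (Fin b) (Fin c) ℝ) :
    bdiag N M * bdiag N E = bdiag N (fun k => M k * E k) := by
  ext ⟨i, x⟩ ⟨j, y⟩
  simp only [bdiag, Matrix.mul_apply, Fintype.sum_prod_type, ite_mul, mul_ite, zero_mul,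
    mul_zero]
  rw [Finset.sum_comm]
  simp [Finset.sum_ite_eq, Finset.sum_ite_eq']
  split_ifs with h <;> simp [h, Matrix.mul_apply]

lemma cyc_mul_bdiag {N a b c : ℕ} (M : ℕ → Matrix (Fin a) (Fin b) ℝ)
    (E : ℕ → Matrix (Fin b) (Fin c) ℝ) :
    cyc N M * bdiag N E = cyc N (fun k => M k * E k) := by
  ext ⟨i, x⟩ ⟨j, y⟩
  simp only [cyc, bdiag, Matrix.mul_apply, Fintype.sum_prod_type, ite_mul, mul_ite, zero_mul,
    mul_zero]
  rw [Finset.sum_comm]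
  simp [Finset.sum_ite_eq, Finset.sum_ite_eq']

lemma bdiag_inv {N m : ℕ} (D : ℕ → Matrix (Fin m) (Fin m) ℝ) (hDinv : ∀ k, IsUnit (D k).det) :
    (bdiag N D)⁻¹ = bdiag N (fun k => (D k)⁻¹) := by
  apply Matrix.inv_eq_right_inv
  rw [bdiag_mul]
  ext ⟨i, x⟩ ⟨j, y⟩
  simp only [bdiag, Matrix.mul_nonsing_inv _ (hDinv _)]
  by_cases h : (⟨i,x⟩ : Fin N × Fin m).1 = (⟨j,y⟩ : Fin N × Fin m).1 <;>
    simp_all [Matrix.one_apply, Prod.ext_iff]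

lemma cyc_sub {N n m : ℕ} (A R : ℕ → Matrix (Fin n) (Fin m) ℝ) :
    cyc N A - cyc N R = cyc N (fun k => A k - R k) := by
  ext p q
  simp only [Matrix.sub_apply, cyc]
  split_ifs <;> simp

lemma mapCyc {N n : ℕ} (Γ : ℕ → Matrix (Fin n) (Fin n) ℝ) :
    (cyc N Γ).map Complex.ofReal = cycC N (fun k => (Γ k).map Complex.ofReal) := by
  ext p q
  simp [cyc, cycC, Matrix.map_apply, apply_ite Complex.ofReal]

lemma mapPd {N n : ℕ} (Γ : ℕ → Matrix (Fin n) (Fin n) ℝ) :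
    (prodDesc Γ N).map Complex.ofReal = pdC (fun k => (Γ k).map Complex.ofReal) N := by
  have hrw : ∀ M : Matrix (Fin n) (Fin n) ℝ,
      M.map Complex.ofReal = Complex.ofRealHom.mapMatrix M := fun _ => rfl
  rw [hrw, prodDesc, map_list_prod, pdC, List.map_map]
  rfl

/-- With `Γ_k = A_k - B_k D_k⁻¹ C_k` and
`Φ_inv = Γ_{N-1} ⋯ Γ_0`, one has `ρ(Φ_inv) < 1 ↔ ρ(Ǎ - B̌ Ď⁻¹ Č) < 1`. -/
theorem specRad_monodromy_iff_cycled {n m N : ℕ} (hN : 1 ≤ N)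
    (A : ℕ → Matrix (Fin n) (Fin n) ℝ) (B : ℕ → Matrix (Fin n) (Fin m) ℝ)
    (C : ℕ → Matrix (Fin m) (Fin n) ℝ) (D : ℕ → Matrix (Fin m) (Fin m) ℝ)
    (hDinv : ∀ k, IsUnit (D k).det) :
    specRad (prodDesc (fun k => A k - B k * (D k)⁻¹ * C k) N) < 1 ↔
      specRad (cyc N A - cyc N B * (bdiag N D)⁻¹ * bdiag N C) < 1 := by
  have hN0 : 0 < N := hN
  have hstruct : cyc N A - cyc N B * (bdiag N D)⁻¹ * bdiag N C
      = cyc N (fun k => A k - B k * (D k)⁻¹ * C k) := by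
    rw [bdiag_inv D hDinv, cyc_mul_bdiag, cyc_mul_bdiag, cyc_sub]
  rw [hstruct]
  unfold specRad
  rw [mapPd, mapCyc]
  exact keyC hN0 _
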